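/- For every configuration M(i,j,U,V) of Minsky's universal Turing machine, the following are equivalent: (i) the machine, started in configuration M(i,j,U,V), halts in finitely many steps; (ii) there exists a positive integer N such that t^N · F(i,j,U,V) = 0 in the algebra H. -/

import Mathlib

noncomputable section

/-- Direction of the head movement of the Turing machine. -/
inductive Dir
  | L
  | R
deriving DecidableEq

/-- The instruction table of Minsky's universal Turing machine: for a state `i` and a color `j`,
`instr i j` is `some (d, q, p)` where `d` is the direction of the head movement, `q` the new
state and `p` the new color of the current cell; it is `none` exactly for the STOP pair
`(4, 3)`. -/
def instr : Fin 7 → Fin 4 → Option (Dir × Fin 7 × Fin 4) := fun i j =>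
  match i.val, j.val with
  | 0, 0 => some (Dir.L, 4, 1)
  | 0, 1 => some (Dir.L, 1, 3)
  | 0, 2 => some (Dir.R, 0, 0)
  | 0, 3 => some (Dir.R, 0, 1)
  | 1, 0 => some (Dir.L, 1, 2)
  | 1, 1 => some (Dir.L, 1, 3)
  | 1, 2 => some (Dir.R, 0, 0)
  | 1, 3 => some (Dir.L, 1, 3)
  | 2, 0 => some (Dir.R, 2, 2)
  | 2, 1 => some (Dir.R, 2, 1)
  | 2, 2 => some (Dir.R, 2, 0)
  | 2, 3 => some (Dir.L, 4, 1)
  | 3, 0 => some (Dir.R, 3, 2)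
  | 3, 1 => some (Dir.R, 3, 1)
  | 3, 2 => some (Dir.R, 3, 0)
  | 3, 3 => some (Dir.L, 4, 0)
  | 4, 0 => some (Dir.L, 5, 2)
  | 4, 1 => some (Dir.L, 4, 1)
  | 4, 2 => some (Dir.L, 4, 0)
  | 4, 3 => none
  | 5, 0 => some (Dir.L, 5, 2)
  | 5, 1 => some (Dir.L, 5, 1)
  | 5, 2 => some (Dir.L, 6, 2)
  | 5, 3 => some (Dir.R, 2, 1)
  | 6, 0 => some (Dir.R, 0, 3)
  | 6, 1 => some (Dir.R, 6, 3)
  | 6, 2 => some (Dir.R, 6, 2)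
  | 6, 3 => some (Dir.R, 3, 1)
  | _, _ => none

/-- A configuration `M(i, j, U, V)` of the machine: the current state `i`, the color `j` of the
current cell, and the lists `U`, `V` of colors of the tape to the left and to the right of the
head. -/
structure Config where
  state : Fin 7
  color : Fin 4
  left : List (Fin 4)
  right : List (Fin 4)

/-- One step of the machine: for a left pair, `M(i,j,U'++[k],V)` passes to
`M(q i j, k, U', p i j :: V)` and `M(i,j,[],V)` passes to `M(q i j, 0, [], p i j :: V)`;
for a right pair, `M(i,j,U,k::V')` passes to `M(q i j, k, U ++ [p i j], V')` and
`M(i,j,U,[])` passes to `M(q i j, 0, U ++ [p i j], [])`. No step is possible from the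
STOP pair `(4,3)`. -/
def step (c : Config) : Option Config :=
  match instr c.state c.color with
  | none => none
  | some (Dir.L, q, p) =>
    match c.left.reverse with
    | [] => some ⟨q, 0, [], p :: c.right⟩
    | k :: U' => some ⟨q, k, U'.reverse, p :: c.right⟩
  | some (Dir.R, q, p) =>
    match c.right with
    | [] => some ⟨q, 0, c.left ++ [p], []⟩
    | k :: V' => some ⟨q, k, c.left ++ [p], V'⟩

/-- Iterating `n` steps of the machine. -/
def stepsFrom : ℕ → Config → Option Config
  | 0, c => some c
  | n + 1, c => (step c).bind (stepsFrom n)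

/-- The machine halts from the configuration `c` if after finitely many steps it reaches a
configuration whose (state, current color) pair is `(4, 3)`. -/
def Halts (c : Config) : Prop :=
  ∃ n c', stepsFrom n c = some c' ∧ c'.state = 4 ∧ c'.color = 3

/-- The alphabet `Ψ = {t, s, a_0, …, a_3, Q_0, …, Q_6, P_0, …, P_3, L, R}`. -/
inductive Psi
  | t
  | s
  | a (k : Fin 4)
  | Q (i : Fin 7)
  | P (j : Fin 4)
  | L
  | R
deriving DecidableEq, Fintype

/-- The image in the free algebra of a word over the alphabet `Ψ`. -/
def wrd (K : Type*) [Field K] (l : List Psi) : FreeAlgebra K Psi :=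
  (l.map (FreeAlgebra.ι K)).prod

open Psi in
/-- The defining relations of the algebra `H`. -/
inductive HRel (K : Type*) [Field K] : FreeAlgebra K Psi → FreeAlgebra K Psi → Prop
  | rel1 (k : Fin 4) :
      HRel K (wrd K [t, L, a k]) (wrd K [L, t, a k])
  | rel2 (k l : Fin 4) :
      HRel K (wrd K [t, a k, a l]) (wrd K [a k, t, a l])
  | rel9 :
      HRel K (wrd K [s, R]) (wrd K [R, s])
  | rel8 (k : Fin 4) :
      HRel K (wrd K [s, a k]) (wrd K [a k, s])
  | rel3 (i : Fin 7) (j : Fin 4) (q : Fin 7) (p : Fin 4) (k : Fin 4)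
      (h : instr i j = some (Dir.L, q, p)) :
      HRel K (wrd K [t, a k, Q i, P j]) (wrd K [Q q, P k, a p, s])
  | rel5 (i : Fin 7) (j : Fin 4) (q : Fin 7) (p : Fin 4)
      (h : instr i j = some (Dir.L, q, p)) :
      HRel K (wrd K [t, L, Q i, P j]) (wrd K [L, Q q, P 0, a p, s])
  | rel4 (i : Fin 7) (j : Fin 4) (q : Fin 7) (p : Fin 4) (l k : Fin 4)
      (h : instr i j = some (Dir.R, q, p)) :
      HRel K (wrd K [t, a l, Q i, P j, a k]) (wrd K [a l, a p, Q q, P k, s])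
  | rel4b (i : Fin 7) (j : Fin 4) (q : Fin 7) (p : Fin 4) (k : Fin 4)
      (h : instr i j = some (Dir.R, q, p)) :
      HRel K (wrd K [t, L, Q i, P j, a k]) (wrd K [L, a p, Q q, P k, s])
  | rel6 (i : Fin 7) (j : Fin 4) (q : Fin 7) (p : Fin 4) (l : Fin 4)
      (h : instr i j = some (Dir.R, q, p)) :
      HRel K (wrd K [t, a l, Q i, P j, R]) (wrd K [a l, a p, Q q, P 0, R, s])
  | rel6b (i : Fin 7) (j : Fin 4) (q : Fin 7) (p : Fin 4)
      (h : instr i j = some (Dir.R, q, p)) :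
      HRel K (wrd K [t, L, Q i, P j, R]) (wrd K [L, a p, Q q, P 0, R, s])
  | rel7 :
      HRel K (wrd K [Q 4, P 3]) 0

/-- The algebra `H`: the quotient of the free associative unital `K`-algebra on `Ψ` by the
two-sided ideal generated by the defining relations. -/
abbrev AlgH (K : Type*) [Field K] := RingQuot (HRel K)

/-- The image in `H` of a word over the alphabet `Ψ`. -/
def mkw (K : Type*) [Field K] (l : List Psi) : AlgH K :=
  RingQuot.mkAlgHom K (HRel K) (wrd K l)

/-- The image of the letter `t` in `H`. -/
def tEl (K : Type*) [Field K] : AlgH K := mkw K [Psi.t]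

/-- The image of the letter `s` in `H`. -/
def sEl (K : Type*) [Field K] : AlgH K := mkw K [Psi.s]

/-- The word `L a_{u_1} ⋯ a_{u_k} Q_i P_j a_{v_1} ⋯ a_{v_l} R` associated to a configuration. -/
def confWord (c : Config) : List Psi :=
  Psi.L :: (c.left.map Psi.a ++ [Psi.Q c.state, Psi.P c.color] ++ c.right.map Psi.a ++ [Psi.R])

/-- The element `F(i, j, U, V)` of the algebra `H` associated to a configuration. -/
def F (K : Type*) [Field K] (c : Config) : AlgH K := mkw K (confWord c)

namespace UTMProof

/-! ### Basic machine lemmas -/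

lemma instr_eq_none_iff : ∀ (i : Fin 7) (j : Fin 4), instr i j = none ↔ i = 4 ∧ j = 3 := by
  decide

lemma step_isSome {c : Config} (h : ¬(c.state = 4 ∧ c.color = 3)) :
    ∃ c', step c = some c' := by
  have hi : instr c.state c.color ≠ none := by
    simpa only [ne_eq, instr_eq_none_iff] using h
  rcases hx : instr c.state c.color with _ | ⟨d, q, p⟩
  · exact absurd hx hi
  · cases d
    · rcases hl : c.left.reverse with _ | ⟨k, U'⟩
      · exact ⟨⟨q, 0, [], p :: c.right⟩, by simp only [step, hx, hl]⟩
      · exact ⟨⟨q, k, U'.reverse, p :: c.right⟩, by simp only [step, hx, hl]⟩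
    · rcases hr : c.right with _ | ⟨k, V'⟩
      · exact ⟨⟨q, 0, c.left ++ [p], []⟩, by simp only [step, hx, hr]⟩
      · exact ⟨⟨q, k, c.left ++ [p], V'⟩, by simp only [step, hx, hr]⟩

lemma stepsFrom_succ' (n : ℕ) (c : Config) :
    stepsFrom (n + 1) c = (stepsFrom n c).bind step := by
  induction n generalizing c with
  | zero =>
    show (step c).bind (stepsFrom 0) = (some c).bind step
    cases hs : step c <;> simp [stepsFrom, hs]
  | succ n ih =>
    show (step c).bind (stepsFrom (n + 1)) = ((step c).bind (stepsFrom n)).bind step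
    cases step c with
    | none => rfl
    | some c1 => simpa using ih c1

/-- From a non-halting configuration, every iterate exists and is not in the stop pair. -/
lemma nonhalt_trajectory {c : Config} (h : ¬ Halts c) (n : ℕ) :
    ∃ cn, stepsFrom n c = some cn ∧ ¬(cn.state = 4 ∧ cn.color = 3) := by
  induction n with
  | zero =>
    refine ⟨c, rfl, ?_⟩
    rintro ⟨h1, h2⟩; exact h ⟨0, c, rfl, h1, h2⟩
  | succ n ih =>
    rcases ih with ⟨cn, hcn, hp⟩
    rcases step_isSome hp with ⟨c', hc'⟩
    refine ⟨c', ?_, ?_⟩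
    · rw [stepsFrom_succ', hcn]; simpa using hc'
    · rintro ⟨h1, h2⟩
      exact h ⟨n + 1, c', by rw [stepsFrom_succ', hcn]; simpa using hc', h1, h2⟩

end UTMProof
namespace UTMProof
open Psi

/-! ### Word lemmas in the algebra -/

variable {K : Type*} [Field K]

lemma wrd_append (l1 l2 : List Psi) : wrd K (l1 ++ l2) = wrd K l1 * wrd K l2 := by
  simp [wrd]

lemma mkw_append (l1 l2 : List Psi) : mkw K (l1 ++ l2) = mkw K l1 * mkw K l2 := by
  rw [mkw, mkw, mkw, wrd_append, map_mul]

lemma mkw_rel {A B : List Psi} (h : HRel K (wrd K A) (wrd K B)) (x y : List Psi) :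
    mkw K (x ++ (A ++ y)) = mkw K (x ++ (B ++ y)) := by
  have hAB : mkw K A = mkw K B := RingQuot.mkAlgHom_rel K h
  rw [mkw_append, mkw_append, mkw_append, mkw_append, hAB]

lemma mkw_QP (x y : List Psi) : mkw K (x ++ ([Q 4, P 3] ++ y)) = 0 := by
  have h0 : mkw K [Q 4, P 3] = 0 := by
    have := RingQuot.mkAlgHom_rel K (HRel.rel7 (K := K))
    rw [map_zero] at this
    exact this
  rw [mkw_append, mkw_append, h0, zero_mul, mul_zero]

lemma mkw_swap_ta (x : List Psi) (u w : Fin 4) (y : List Psi) :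
    mkw K (x ++ (t :: a u :: a w :: y)) = mkw K (x ++ (a u :: t :: a w :: y)) :=
  mkw_rel (HRel.rel2 u w) x y

/-- Move `t` to the right through a block of `a`'s, stopping right before the last one. -/
lemma mkw_t_walk (x : List Psi) (U : List (Fin 4)) (k : Fin 4) (y : List Psi) :
    mkw K (x ++ (t :: (U.map a ++ (a k :: y)))) =
    mkw K (x ++ (U.map a ++ (t :: a k :: y))) := by
  induction U generalizing x with
  | nil => simp
  | cons u U ih =>
    cases U with
    | nil =>
      simpa using mkw_swap_ta x u k y
    | cons u' U' =>
      have h1 := mkw_swap_ta (K := K) x u u' ((U'.map a ++ (a k :: y)))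
      have h2 := ih (x ++ [a u])
      simp only [List.map_cons, List.cons_append, List.append_assoc,
        List.singleton_append, List.nil_append] at h1 h2 ⊢
      rw [h1, h2]

/-- Move `t` rightwards past `L` and a nonempty block of `a`'s. -/
lemma mkw_tL_walk (x : List Psi) (U : List (Fin 4)) (k : Fin 4) (y : List Psi) :
    mkw K (x ++ (t :: Psi.L :: (U.map a ++ (a k :: y)))) =
    mkw K (x ++ (Psi.L :: (U.map a ++ (t :: a k :: y)))) := by
  cases U with
  | nil => simpa using mkw_rel (K := K) (HRel.rel1 k) x y
  | cons u U' =>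
    have h1 := mkw_rel (K := K) (HRel.rel1 u) x ((U'.map a ++ (a k :: y)))
    have h2 := mkw_t_walk (K := K) (x ++ [Psi.L]) (u :: U') k y
    simp only [List.map_cons, List.cons_append, List.append_assoc,
      List.singleton_append, List.nil_append] at h1 h2 ⊢
    rw [h1, h2]

/-- Move `s` to the right through a block of `a`'s followed by `R`. -/
lemma mkw_s_walk (x : List Psi) (V : List (Fin 4)) (y : List Psi) :
    mkw K (x ++ (s :: (V.map a ++ (Psi.R :: y)))) =
    mkw K (x ++ (V.map a ++ (Psi.R :: s :: y))) := by
  induction V generalizing x with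
  | nil => simpa using mkw_rel (HRel.rel9 (K := K)) x y
  | cons v V' ih =>
    have h1 := mkw_rel (K := K) (HRel.rel8 v) x (V'.map a ++ (Psi.R :: y))
    have h2 := ih (x ++ [a v])
    simp only [List.map_cons, List.cons_append, List.append_assoc,
      List.singleton_append, List.nil_append] at h1 h2 ⊢
    rw [h1, h2]

end UTMProof
namespace UTMProof
open Psi

variable {K : Type*} [Field K]

lemma tF_eq {c c' : Config} (h : step c = some c') :
    tEl K * F K c = F K c' * sEl K := by
  obtain ⟨i, j, U, V⟩ := c
  have e1 : tEl K * F K ⟨i, j, U, V⟩ = mkw K (t :: confWord ⟨i, j, U, V⟩) :=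
    (mkw_append [t] _).symm
  have e2 : F K c' * sEl K = mkw K (confWord c' ++ [s]) :=
    (mkw_append _ [s]).symm
  rw [e1, e2]
  rcases hx : instr i j with _ | ⟨d, q, p⟩
  · simp [step, hx] at h
  cases d
  · -- left pair
    rcases hrev : U.reverse with _ | ⟨k, rest⟩
    · have hU : U = [] := by simpa using congrArg List.reverse hrev
      subst hU
      have hc' : c' = ⟨q, 0, [], p :: V⟩ := by
        simp only [step, hx, List.reverse_nil] at h
        exact (Option.some_injective _ h).symm
      subst hc'
      have step1 := mkw_rel (K := K) (HRel.rel5 i j q p hx) [] (List.map a V ++ R :: [])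
      have step2 := mkw_s_walk (K := K) [Psi.L, Q q, P 0, a p] V []
      simp only [confWord, List.map_cons, List.map_nil, List.cons_append, List.nil_append,
        List.append_assoc, List.singleton_append, List.map_append] at step1 step2 ⊢
      rw [step1, step2]
    · have hU : U = rest.reverse ++ [k] := by
        rw [← List.reverse_reverse U, hrev, List.reverse_cons]
      have hc' : c' = ⟨q, k, rest.reverse, p :: V⟩ := by
        simp only [step, hx, hrev] at h
        exact (Option.some_injective _ h).symm
      subst hc'
      rw [hU]
      have step0 := mkw_tL_walk (K := K) [] rest.reverse k
        (Q i :: P j :: (List.map a V ++ R :: []))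
      have step1 := mkw_rel (K := K) (HRel.rel3 i j q p k hx)
        (Psi.L :: List.map a rest.reverse) (List.map a V ++ R :: [])
      have step2 := mkw_s_walk (K := K)
        (Psi.L :: List.map a rest.reverse ++ [Q q, P k, a p]) V []
      simp only [confWord, List.map_cons, List.map_nil, List.cons_append, List.nil_append,
        List.append_assoc, List.singleton_append, List.map_append] at step0 step1 step2 ⊢
      rw [step0, step1, step2]
  · -- right pair
    rcases hV : V with _ | ⟨v, V'⟩ <;> subst hV
    · have hc' : c' = ⟨q, 0, U ++ [p], []⟩ := by
        simp only [step, hx] at h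
        exact (Option.some_injective _ h).symm
      subst hc'
      rcases List.eq_nil_or_concat U with hU | ⟨U'', k, hU⟩
      · subst hU
        have step1 := mkw_rel (K := K) (HRel.rel6b i j q p hx) [] []
        simp only [confWord, List.map_cons, List.map_nil, List.cons_append, List.nil_append,
          List.append_assoc, List.singleton_append, List.map_append] at step1 ⊢
        rw [step1]
      · rw [List.concat_eq_append] at hU; subst hU
        have step0 := mkw_tL_walk (K := K) [] U'' k (Q i :: P j :: R :: [])
        have step1 := mkw_rel (K := K) (HRel.rel6 i j q p k hx) (Psi.L :: List.map a U'') []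
        simp only [confWord, List.map_cons, List.map_nil, List.cons_append, List.nil_append,
          List.append_assoc, List.singleton_append, List.map_append] at step0 step1 ⊢
        rw [step0, step1]
    · have hc' : c' = ⟨q, v, U ++ [p], V'⟩ := by
        simp only [step, hx] at h
        exact (Option.some_injective _ h).symm
      subst hc'
      rcases List.eq_nil_or_concat U with hU | ⟨U'', k, hU⟩
      · subst hU
        have step1 := mkw_rel (K := K) (HRel.rel4b i j q p v hx) [] (List.map a V' ++ R :: [])
        have step2 := mkw_s_walk (K := K) [Psi.L, a p, Q q, P v] V' []
        simp only [confWord, List.map_cons, List.map_nil, List.cons_append, List.nil_append,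
          List.append_assoc, List.singleton_append, List.map_append] at step1 step2 ⊢
        rw [step1, step2]
      · rw [List.concat_eq_append] at hU; subst hU
        have step0 := mkw_tL_walk (K := K) [] U'' k
          (Q i :: P j :: a v :: (List.map a V' ++ R :: []))
        have step1 := mkw_rel (K := K) (HRel.rel4 i j q p k v hx)
          (Psi.L :: List.map a U'') (List.map a V' ++ R :: [])
        have step2 := mkw_s_walk (K := K)
          (Psi.L :: List.map a U'' ++ [a k, a p, Q q, P v]) V' []
        simp only [confWord, List.map_cons, List.map_nil, List.cons_append, List.nil_append,
          List.append_assoc, List.singleton_append, List.map_append] at step0 step1 step2 ⊢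
        rw [step0, step1, step2]

end UTMProof
namespace UTMProof
open Psi

variable {K : Type*} [Field K]

lemma F_halt {c : Config} (h4 : c.state = 4) (h3 : c.color = 3) : F K c = 0 := by
  obtain ⟨i, j, U, V⟩ := c
  subst h4; subst h3
  have := mkw_QP (K := K) (Psi.L :: List.map a U) (List.map a V ++ [Psi.R])
  simp only [F, confWord, List.cons_append, List.nil_append, List.append_assoc,
    List.singleton_append] at this ⊢
  exact this

lemma t_pow_F {c : Config} (n : ℕ) {cn : Config} (h : stepsFrom n c = some cn) :
    tEl K ^ n * F K c = F K cn * sEl K ^ n := by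
  induction n generalizing c with
  | zero =>
    simp only [stepsFrom, Option.some_inj] at h
    subst h; simp
  | succ n ih =>
    have : stepsFrom (n + 1) c = (step c).bind (stepsFrom n) := rfl
    rw [this] at h
    rcases hs : step c with _ | c1
    · rw [hs] at h; simp at h
    · rw [hs] at h; simp only [Option.bind_some, Option.bind_some] at h
      have h1 : tEl K * F K c = F K c1 * sEl K := tF_eq hs
      calc tEl K ^ (n + 1) * F K c = tEl K ^ n * (tEl K * F K c) := by
            rw [pow_succ, mul_assoc]
        _ = tEl K ^ n * (F K c1 * sEl K) := by rw [h1]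
        _ = (tEl K ^ n * F K c1) * sEl K := by rw [mul_assoc]
        _ = (F K cn * sEl K ^ n) * sEl K := by rw [ih h]
        _ = F K cn * sEl K ^ (n + 1) := by rw [mul_assoc, ← pow_succ]

lemma forward_dir {c : Config} (h : Halts c) :
    ∃ N : ℕ, 0 < N ∧ tEl K ^ N * F K c = 0 := by
  rcases h with ⟨n, c', hsteps, h4, h3⟩
  refine ⟨n + 1, Nat.succ_pos n, ?_⟩
  rw [pow_succ', mul_assoc, t_pow_F n hsteps, F_halt h4 h3, zero_mul, mul_zero]

end UTMProof
namespace UTMProof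

/-! ### A normal-form insertion function on words -/

/-- Push `s` to the right through `a`'s and `R`. -/
def sIns : List Psi → List Psi
  | Psi.a k :: r => Psi.a k :: sIns r
  | Psi.R :: r => Psi.R :: sIns r
  | u => Psi.s :: u

/-- Prepend `Q q` and `P k`, collapsing to zero on the stop pair. -/
def qp (q : Fin 7) (k : Fin 4) (r : List Psi) : Option (List Psi) :=
  if q = 4 ∧ k = 3 then none else some (Psi.Q q :: Psi.P k :: r)

/-- Insert `t` in front of a word, performing all rewrites. -/
def tIns : List Psi → Option (List Psi)
  | Psi.L :: Psi.a k :: r => (tIns (Psi.a k :: r)).map (Psi.L :: ·)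
  | Psi.a k :: Psi.a l :: r => (tIns (Psi.a l :: r)).map (Psi.a k :: ·)
  | Psi.a k :: Psi.Q i :: Psi.P j :: r =>
      match instr i j with
      | some (Dir.L, q, p) => qp q k (Psi.a p :: sIns r)
      | some (Dir.R, q, p) =>
          match r with
          | Psi.a k' :: r' => (qp q k' (sIns r')).map fun w => Psi.a k :: Psi.a p :: w
          | Psi.R :: r' => (qp q 0 (Psi.R :: sIns r')).map fun w => Psi.a k :: Psi.a p :: w
          | _ => some (Psi.t :: Psi.a k :: Psi.Q i :: Psi.P j :: r)
      | none => some (Psi.t :: Psi.a k :: Psi.Q i :: Psi.P j :: r)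
  | Psi.L :: Psi.Q i :: Psi.P j :: r =>
      match instr i j with
      | some (Dir.L, q, p) => (qp q 0 (Psi.a p :: sIns r)).map (Psi.L :: ·)
      | some (Dir.R, q, p) =>
          match r with
          | Psi.a k :: r' => (qp q k (sIns r')).map fun w => Psi.L :: Psi.a p :: w
          | Psi.R :: r' => (qp q 0 (Psi.R :: sIns r')).map fun w => Psi.L :: Psi.a p :: w
          | _ => some (Psi.t :: Psi.L :: Psi.Q i :: Psi.P j :: r)
      | none => some (Psi.t :: Psi.L :: Psi.Q i :: Psi.P j :: r)
  | u => some (Psi.t :: u)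

/-- Insert one letter in front of a word, performing all rewrites. -/
def ins : Psi → List Psi → Option (List Psi)
  | Psi.t, u => tIns u
  | Psi.s, u => some (sIns u)
  | Psi.Q q, Psi.P k :: r => qp q k r
  | x, u => some (x :: u)

/-- Insert a word letter by letter (rightmost first). -/
def insW (l : List Psi) (o : Option (List Psi)) : Option (List Psi) :=
  l.foldr (fun x acc => acc.bind (ins x)) o

@[simp] lemma insW_nil (o : Option (List Psi)) : insW [] o = o := rfl

@[simp] lemma insW_cons (x : Psi) (l : List Psi) (o : Option (List Psi)) :
    insW (x :: l) o = (insW l o).bind (ins x) := rfl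

@[simp] lemma insW_append (l1 l2 : List Psi) (o : Option (List Psi)) :
    insW (l1 ++ l2) o = insW l1 (insW l2 o) := by
  simp [insW, List.foldr_append]

@[simp] lemma insW_none (l : List Psi) : insW l none = none := by
  induction l with
  | nil => rfl
  | cons x l ih => simp [ih]

end UTMProof
namespace UTMProof

@[simp] lemma ins_t (u : List Psi) : ins Psi.t u = tIns u := rfl
@[simp] lemma ins_s (u : List Psi) : ins Psi.s u = some (sIns u) := rfl
@[simp] lemma ins_a (k : Fin 4) (u : List Psi) : ins (Psi.a k) u = some (Psi.a k :: u) := rfl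
@[simp] lemma ins_L (u : List Psi) : ins Psi.L u = some (Psi.L :: u) := rfl
@[simp] lemma ins_R (u : List Psi) : ins Psi.R u = some (Psi.R :: u) := rfl
@[simp] lemma ins_P (j : Fin 4) (u : List Psi) : ins (Psi.P j) u = some (Psi.P j :: u) := rfl
@[simp] lemma ins_Q_P (q : Fin 7) (k : Fin 4) (r : List Psi) :
    ins (Psi.Q q) (Psi.P k :: r) = qp q k r := rfl

@[simp] lemma sIns_a (k : Fin 4) (r : List Psi) : sIns (Psi.a k :: r) = Psi.a k :: sIns r := rfl
@[simp] lemma sIns_R (r : List Psi) : sIns (Psi.R :: r) = Psi.R :: sIns r := rfl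
@[simp] lemma sIns_nil : sIns [] = [Psi.s] := rfl
@[simp] lemma sIns_s (r : List Psi) : sIns (Psi.s :: r) = Psi.s :: Psi.s :: r := rfl

@[simp] lemma tIns_La (k : Fin 4) (r : List Psi) :
    tIns (Psi.L :: Psi.a k :: r) = (tIns (Psi.a k :: r)).map (Psi.L :: ·) := rfl
@[simp] lemma tIns_aa (k l : Fin 4) (r : List Psi) :
    tIns (Psi.a k :: Psi.a l :: r) = (tIns (Psi.a l :: r)).map (Psi.a k :: ·) := rfl

end UTMProof
namespace UTMProof

lemma tIns_aQP_L {i : Fin 7} {j : Fin 4} {q : Fin 7} {p : Fin 4}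
    (h : instr i j = some (Dir.L, q, p)) (k : Fin 4) (r : List Psi) :
    tIns (Psi.a k :: Psi.Q i :: Psi.P j :: r) = qp q k (Psi.a p :: sIns r) := by
  simp only [tIns, h]

lemma tIns_LQP_L {i : Fin 7} {j : Fin 4} {q : Fin 7} {p : Fin 4}
    (h : instr i j = some (Dir.L, q, p)) (r : List Psi) :
    tIns (Psi.L :: Psi.Q i :: Psi.P j :: r) = (qp q 0 (Psi.a p :: sIns r)).map (Psi.L :: ·) := by
  simp only [tIns, h]

lemma tIns_aQPa_R {i : Fin 7} {j : Fin 4} {q : Fin 7} {p : Fin 4}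
    (h : instr i j = some (Dir.R, q, p)) (k k' : Fin 4) (r' : List Psi) :
    tIns (Psi.a k :: Psi.Q i :: Psi.P j :: Psi.a k' :: r') =
      (qp q k' (sIns r')).map fun w => Psi.a k :: Psi.a p :: w := by
  simp only [tIns, h]

lemma tIns_aQPR_R {i : Fin 7} {j : Fin 4} {q : Fin 7} {p : Fin 4}
    (h : instr i j = some (Dir.R, q, p)) (k : Fin 4) (r' : List Psi) :
    tIns (Psi.a k :: Psi.Q i :: Psi.P j :: Psi.R :: r') =
      (qp q 0 (Psi.R :: sIns r')).map fun w => Psi.a k :: Psi.a p :: w := by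
  simp only [tIns, h]

lemma tIns_LQPa_R {i : Fin 7} {j : Fin 4} {q : Fin 7} {p : Fin 4}
    (h : instr i j = some (Dir.R, q, p)) (k : Fin 4) (r' : List Psi) :
    tIns (Psi.L :: Psi.Q i :: Psi.P j :: Psi.a k :: r') =
      (qp q k (sIns r')).map fun w => Psi.L :: Psi.a p :: w := by
  simp only [tIns, h]

lemma tIns_LQPR_R {i : Fin 7} {j : Fin 4} {q : Fin 7} {p : Fin 4}
    (h : instr i j = some (Dir.R, q, p)) (r' : List Psi) :
    tIns (Psi.L :: Psi.Q i :: Psi.P j :: Psi.R :: r') =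
      (qp q 0 (Psi.R :: sIns r')).map fun w => Psi.L :: Psi.a p :: w := by
  simp only [tIns, h]

end UTMProof
namespace UTMProof

variable (K : Type*) [Field K]

/-- The representation space: the free module on all words. -/
abbrev V := List Psi →₀ K

/-- Interpret an optional word as a basis vector (or zero). -/
def optV : Option (List Psi) → V K
  | none => 0
  | some u => Finsupp.single u 1

@[simp] lemma optV_none : optV K none = 0 := rfl
@[simp] lemma optV_some (u : List Psi) : optV K (some u) = Finsupp.single u 1 := rfl

/-- The action of a letter on the representation space. -/
def T (x : Psi) : Module.End K (V K) :=
  Finsupp.lift (V K) K (List Psi) fun u => optV K (ins x u)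

lemma T_single (x : Psi) (u : List Psi) :
    T K x (Finsupp.single u 1) = optV K (ins x u) := by
  simp [T, Finsupp.lift_apply, Finsupp.sum_single_index]

lemma T_optV (x : Psi) (o : Option (List Psi)) :
    T K x (optV K o) = optV K (o.bind (ins x)) := by
  cases o with
  | none => simp
  | some u => simp [T_single]

lemma end_ext {f g : Module.End K (V K)}
    (h : ∀ u : List Psi, f (Finsupp.single u 1) = g (Finsupp.single u 1)) : f = g := by
  apply Finsupp.lhom_ext'
  intro u
  apply LinearMap.ext
  intro b
  have hb : (Finsupp.single u b : V K) = b • Finsupp.single u 1 := by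
    simp [Finsupp.smul_single]
  simp only [LinearMap.comp_apply, Finsupp.lsingle_apply, hb, map_smul, h u]

/-- The representation of the free algebra. -/
def rho : FreeAlgebra K Psi →ₐ[K] Module.End K (V K) :=
  FreeAlgebra.lift K (T K)

lemma rho_wrd (l : List Psi) (u : List Psi) :
    rho K (wrd K l) (Finsupp.single u 1) = optV K (insW l (some u)) := by
  induction l with
  | nil =>
    simp [wrd, rho, insW]
  | cons x l ih =>
    have hw : wrd K (x :: l) = FreeAlgebra.ι K x * wrd K l := by
      simp [wrd]
    rw [hw, map_mul, Module.End.mul_apply, ih, rho, FreeAlgebra.lift_ι_apply, T_optV,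
      insW_cons]

end UTMProof
namespace UTMProof

@[simp] lemma bind_ins_L (o : Option (List Psi)) :
    o.bind (ins Psi.L) = o.map (Psi.L :: ·) := by cases o <;> rfl
@[simp] lemma bind_ins_a (k : Fin 4) (o : Option (List Psi)) :
    o.bind (ins (Psi.a k)) = o.map (Psi.a k :: ·) := by cases o <;> rfl
@[simp] lemma bind_ins_R (o : Option (List Psi)) :
    o.bind (ins Psi.R) = o.map (Psi.R :: ·) := by cases o <;> rfl
@[simp] lemma bind_ins_P (j : Fin 4) (o : Option (List Psi)) :
    o.bind (ins (Psi.P j)) = o.map (Psi.P j :: ·) := by cases o <;> rfl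
@[simp] lemma bind_ins_s (o : Option (List Psi)) :
    o.bind (ins Psi.s) = o.map sIns := by cases o <;> rfl

lemma not_stop_of_instr {i : Fin 7} {j : Fin 4} {y} (h : instr i j = some y) :
    ¬(i = 4 ∧ j = 3) := by
  intro hij
  rw [(instr_eq_none_iff i j).2 hij] at h
  exact Option.some_ne_none _ h.symm

@[simp] lemma bind_some_eq_map {α β : Type*} (f : α → β) (o : Option α) :
    o.bind (fun a => some (f a)) = o.map f := by cases o <;> rfl

variable {K : Type*} [Field K]

lemma rho_rel : ∀ ⦃x y : FreeAlgebra K Psi⦄, HRel K x y → rho K x = rho K y := by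
  intro x y h
  induction h with
  | rel1 k =>
    apply end_ext
    intro u
    rw [rho_wrd, rho_wrd]
    simp [insW]
  | rel2 k l =>
    apply end_ext
    intro u
    rw [rho_wrd, rho_wrd]
    simp [insW]
  | rel9 =>
    apply end_ext
    intro u
    rw [rho_wrd, rho_wrd]
    simp [insW]
  | rel8 k =>
    apply end_ext
    intro u
    rw [rho_wrd, rho_wrd]
    simp [insW]
  | rel3 i j q p k h =>
    apply end_ext
    intro u
    rw [rho_wrd, rho_wrd]
    have hij := not_stop_of_instr h
    simp [insW, qp, hij, tIns_aQP_L h]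
  | rel5 i j q p h =>
    apply end_ext
    intro u
    rw [rho_wrd, rho_wrd]
    have hij := not_stop_of_instr h
    simp [insW, qp, hij, tIns_LQP_L h, Option.map_map, Function.comp_def]
  | rel4 i j q p l k h =>
    apply end_ext
    intro u
    rw [rho_wrd, rho_wrd]
    have hij := not_stop_of_instr h
    simp [insW, qp, hij, tIns_aQPa_R h, Option.map_map, Function.comp_def]
  | rel4b i j q p k h =>
    apply end_ext
    intro u
    rw [rho_wrd, rho_wrd]
    have hij := not_stop_of_instr h
    simp [insW, qp, hij, tIns_LQPa_R h, Option.map_map, Function.comp_def]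
  | rel6 i j q p l h =>
    apply end_ext
    intro u
    rw [rho_wrd, rho_wrd]
    have hij := not_stop_of_instr h
    simp [insW, qp, hij, tIns_aQPR_R h, Option.map_map, Function.comp_def]
  | rel6b i j q p h =>
    apply end_ext
    intro u
    rw [rho_wrd, rho_wrd]
    have hij := not_stop_of_instr h
    simp [insW, qp, hij, tIns_LQPR_R h, Option.map_map, Function.comp_def]
  | rel7 =>
    apply end_ext
    intro u
    rw [rho_wrd, map_zero]
    simp [insW, qp]

/-- The representation of the algebra `H`. -/
def rhoQ : AlgH K →ₐ[K] Module.End K (V K) :=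
  RingQuot.liftAlgHom K ⟨rho K, rho_rel⟩

lemma rhoQ_mkw (l : List Psi) : rhoQ (K := K) (mkw K l) = rho K (wrd K l) :=
  RingQuot.liftAlgHom_mkAlgHom_apply K (rho K) rho_rel (wrd K l)

end UTMProof
namespace UTMProof

lemma sIns_rep (m : ℕ) : sIns (List.replicate m Psi.s) = Psi.s :: List.replicate m Psi.s := by
  cases m <;> rfl

lemma sIns_through (V : List (Fin 4)) {w : List Psi} (hw : sIns w = Psi.s :: w) :
    sIns (List.map Psi.a V ++ Psi.R :: w) = List.map Psi.a V ++ Psi.R :: Psi.s :: w := by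
  induction V with
  | nil => simp [hw]
  | cons v V ih => simp [ih]

lemma tIns_walk (U : List (Fin 4)) (k : Fin 4) (i : Fin 7) (j : Fin 4) (r : List Psi) :
    tIns (List.map Psi.a U ++ Psi.a k :: Psi.Q i :: Psi.P j :: r) =
      (tIns (Psi.a k :: Psi.Q i :: Psi.P j :: r)).map (List.map Psi.a U ++ ·) := by
  induction U with
  | nil =>
    cases htk : tIns (Psi.a k :: Psi.Q i :: Psi.P j :: r) <;> simp [htk]
  | cons u U ih =>
    cases U with
    | nil =>
      simp [Option.map_map, Function.comp_def]
    | cons u' U' =>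
      simp only [List.map_cons, List.cons_append] at ih ⊢
      rw [tIns_aa, ih, Option.map_map]
      simp [Function.comp_def]

lemma tIns_L_walk (U : List (Fin 4)) (k : Fin 4) (i : Fin 7) (j : Fin 4) (r : List Psi) :
    tIns (Psi.L :: (List.map Psi.a U ++ Psi.a k :: Psi.Q i :: Psi.P j :: r)) =
      (tIns (Psi.a k :: Psi.Q i :: Psi.P j :: r)).map
        (fun v => Psi.L :: (List.map Psi.a U ++ v)) := by
  cases U with
  | nil =>
    simp [Option.map_map, Function.comp_def]
  | cons u U' =>
    simp only [List.map_cons, List.cons_append]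
    have hwalk := tIns_walk (u :: U') k i j r
    simp only [List.map_cons, List.cons_append] at hwalk
    rw [tIns_La, hwalk, Option.map_map]
    simp [Function.comp_def]

end UTMProof
namespace UTMProof

lemma qp_ne {q : Fin 7} {k : Fin 4} (h : ¬(q = 4 ∧ k = 3)) (r : List Psi) :
    qp q k r = some (Psi.Q q :: Psi.P k :: r) := by simp [qp, h]

lemma tIns_conf {c c' : Config} (h : step c = some c')
    (h' : ¬(c'.state = 4 ∧ c'.color = 3)) {w : List Psi} (hw : sIns w = Psi.s :: w) :
    tIns (confWord c ++ w) = some (confWord c' ++ Psi.s :: w) := by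
  obtain ⟨i, j, U, V⟩ := c
  rcases hx : instr i j with _ | ⟨d, q, p⟩
  · simp [step, hx] at h
  cases d
  · -- left pair
    rcases hrev : U.reverse with _ | ⟨k, rest⟩
    · have hU : U = [] := by simpa using congrArg List.reverse hrev
      subst hU
      have hc' : c' = ⟨q, 0, [], p :: V⟩ := by
        simp only [step, hx, List.reverse_nil] at h
        exact (Option.some_injective _ h).symm
      subst hc'
      have e1 := tIns_LQP_L hx (List.map Psi.a V ++ Psi.R :: w)
      simp only [confWord, List.map_cons, List.map_nil, List.cons_append, List.nil_append,
        List.append_assoc, List.singleton_append, List.map_append]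
      rw [e1, sIns_through V hw, qp_ne (by simp) _]
      rfl
    · have hU : U = rest.reverse ++ [k] := by
        rw [← List.reverse_reverse U, hrev, List.reverse_cons]
      subst hU
      have hc' : c' = ⟨q, k, rest.reverse, p :: V⟩ := by
        simp only [step, hx, List.reverse_append, List.reverse_cons, List.reverse_nil,
          List.nil_append, List.reverse_reverse, List.singleton_append] at h
        exact (Option.some_injective _ h).symm
      subst hc'
      simp only [Config.state, Config.color] at h'
      have e0 := tIns_L_walk rest.reverse k i j (List.map Psi.a V ++ Psi.R :: w)
      have e1 := tIns_aQP_L hx k (List.map Psi.a V ++ Psi.R :: w)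
      simp only [confWord, List.map_cons, List.map_nil, List.cons_append, List.nil_append,
        List.append_assoc, List.singleton_append, List.map_append]
      rw [e0, e1, sIns_through V hw, qp_ne h' _]
      simp
  · -- right pair
    rcases hV : V with _ | ⟨v, V'⟩ <;> subst hV
    · have hc' : c' = ⟨q, 0, U ++ [p], []⟩ := by
        simp only [step, hx] at h
        exact (Option.some_injective _ h).symm
      subst hc'
      rcases List.eq_nil_or_concat U with hU | ⟨U'', k, hU⟩
      · subst hU
        have e1 := tIns_LQPR_R hx w
        simp only [confWord, List.map_cons, List.map_nil, List.cons_append, List.nil_append,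
          List.append_assoc, List.singleton_append, List.map_append]
        rw [e1, hw, qp_ne (by simp) _]
        rfl
      · rw [List.concat_eq_append] at hU; subst hU
        have e0 := tIns_L_walk U'' k i j (Psi.R :: w)
        have e1 := tIns_aQPR_R hx k w
        simp only [confWord, List.map_cons, List.map_nil, List.cons_append, List.nil_append,
          List.append_assoc, List.singleton_append, List.map_append]
        rw [e0, e1, hw, qp_ne (by simp) _]
        simp
    · have hc' : c' = ⟨q, v, U ++ [p], V'⟩ := by
        simp only [step, hx] at h
        exact (Option.some_injective _ h).symm
      subst hc'
      simp only [Config.state, Config.color] at h'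
      rcases List.eq_nil_or_concat U with hU | ⟨U'', k, hU⟩
      · subst hU
        have e1 := tIns_LQPa_R hx v (List.map Psi.a V' ++ Psi.R :: w)
        simp only [confWord, List.map_cons, List.map_nil, List.cons_append, List.nil_append,
          List.append_assoc, List.singleton_append, List.map_append]
        rw [e1, sIns_through V' hw, qp_ne h' _]
        rfl
      · rw [List.concat_eq_append] at hU; subst hU
        have e0 := tIns_L_walk U'' k i j (Psi.a v :: (List.map Psi.a V' ++ Psi.R :: w))
        have e1 := tIns_aQPa_R hx k v (List.map Psi.a V' ++ Psi.R :: w)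
        simp only [confWord, List.map_cons, List.map_nil, List.cons_append, List.nil_append,
          List.append_assoc, List.singleton_append, List.map_append]
        rw [e0, e1, sIns_through V' hw, qp_ne h' _]
        simp

end UTMProof
namespace UTMProof

variable {K : Type*} [Field K]

lemma insW_map_a (V : List (Fin 4)) (u : List Psi) :
    insW (List.map Psi.a V) (some u) = some (List.map Psi.a V ++ u) := by
  induction V with
  | nil => simp
  | cons v V ih => simp [ih]

lemma insW_confWord {c : Config} (hc : ¬(c.state = 4 ∧ c.color = 3)) :
    insW (confWord c) (some []) = some (confWord c) := by
  obtain ⟨i, j, U, V⟩ := c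
  simp only [Config.state, Config.color] at hc
  simp [confWord, insW_map_a, qp_ne hc]

lemma mkw_nil : mkw K [] = 1 := by
  have h1 : wrd K [] = 1 := by simp [wrd]
  show RingQuot.mkAlgHom K (HRel K) (wrd K []) = 1
  rw [h1, map_one]

lemma tEl_pow (N : ℕ) :
    tEl K ^ N = mkw K (List.replicate N Psi.t) := by
  induction N with
  | zero => rw [pow_zero, List.replicate_zero, mkw_nil]
  | succ n ih =>
    rw [pow_succ', ih, tEl, ← mkw_append]
    rfl

lemma traj {c : Config} (hNH : ¬ Halts c) (N : ℕ) :
    ∃ cN, stepsFrom N c = some cN ∧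
      insW (List.replicate N Psi.t) (some (confWord c)) =
        some (confWord cN ++ List.replicate N Psi.s) := by
  induction N with
  | zero => exact ⟨c, rfl, by simp⟩
  | succ N ih =>
    obtain ⟨cN, hsteps, hins⟩ := ih
    obtain ⟨cN', hstepsN, hpair⟩ := nonhalt_trajectory hNH N
    rw [hsteps] at hstepsN
    obtain rfl : cN = cN' := by injection hstepsN
    obtain ⟨c', hc'⟩ := step_isSome hpair
    have hsteps' : stepsFrom (N + 1) c = some c' := by
      rw [stepsFrom_succ', hsteps]; simpa using hc'
    have hpair' : ¬(c'.state = 4 ∧ c'.color = 3) := by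
      rintro ⟨h1, h2⟩; exact hNH ⟨N + 1, c', hsteps', h1, h2⟩
    refine ⟨c', hsteps', ?_⟩
    rw [List.replicate_succ, insW_cons, hins]
    simp only [Option.bind_some, ins_t]
    rw [tIns_conf hc' hpair' (sIns_rep N)]
    rfl

lemma backward_dir {K : Type*} [Field K] {c : Config} (hNH : ¬ Halts c) (N : ℕ) :
    tEl K ^ N * F K c ≠ 0 := by
  intro h0
  obtain ⟨cN, _, hins⟩ := traj hNH N
  have hc : ¬(c.state = 4 ∧ c.color = 3) := by
    rintro ⟨h1, h2⟩; exact hNH ⟨0, c, rfl, h1, h2⟩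
  have hval : rhoQ (K := K) (tEl K ^ N * F K c) (Finsupp.single [] 1) =
      Finsupp.single (confWord cN ++ List.replicate N Psi.s) (1 : K) := by
    rw [tEl_pow, F, ← mkw_append, rhoQ_mkw, rho_wrd, insW_append, insW_confWord hc, hins]
    simp
  rw [h0, map_zero, LinearMap.zero_apply] at hval
  exact one_ne_zero (Finsupp.single_eq_zero.1 hval.symm)

end UTMProof
/-- The machine started in the configuration `M(i,j,U,V)` halts in finitely
many steps if and only if there is a positive integer `N` with `t^N · F(i,j,U,V) = 0` in `H`. -/
theorem halts_iff_tN_mul_F_eq_zero (K : Type*) [Field K] (c : Config) :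
    Halts c ↔ ∃ N : ℕ, 0 < N ∧ tEl K ^ N * F K c = 0 := by
  constructor
  · exact fun h => UTMProof.forward_dir h
  · rintro ⟨N, _, h0⟩
    by_contra hNH
    exact UTMProof.backward_dir hNH N h0
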